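/- Let a, b, c ∈ ℕ be positive integers with gcd(a,b,c) = 1 and with √(b²+4ac) irrational, and let α be a root of ax² − bx − c. If a = 1, then the set of atoms of M_α is exactly A(M_α) = {1, α}. If a > 1, then A(M_α) = {α^n : n ∈ ℕ₀}, which is infinite. -/

import Mathlib

open Polynomial

/-- `M_α`: the additive submonoid of `ℂ` generated by the nonnegative powers of `α`. -/
def Malpha (α : ℂ) : AddSubmonoid ℂ :=
  AddSubmonoid.closure (Set.range fun n : ℕ => α ^ n)

/-- The set of atoms of `M_α`: nonzero elements of `M_α` that cannot be written as a sum
of two nonzero elements of `M_α`. -/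
def atomsM (α : ℂ) : Set ℂ :=
  {a | a ∈ Malpha α ∧ a ≠ 0 ∧
    ∀ u v : ℂ, u ∈ Malpha α → v ∈ Malpha α → a = u + v → u = 0 ∨ v = 0}

/-- `M_α` is atomic: every nonzero element is a finite sum of atoms. -/
def IsAtomicMalpha (α : ℂ) : Prop :=
  ∀ x ∈ Malpha α, x ≠ 0 →
    ∃ s : Multiset ℂ, (∀ a ∈ s, a ∈ atomsM α) ∧ s.sum = x

/-- The set of strong atoms of `M_α`: atoms `a` such that for every `n ≥ 1` the only
multiset of atoms summing to `n • a` is the one consisting of `n` copies of `a`. -/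
def strongAtomsM (α : ℂ) : Set ℂ :=
  {a | a ∈ atomsM α ∧ ∀ n : ℕ, 0 < n →
    ∀ s : Multiset ℂ, (∀ b ∈ s, b ∈ atomsM α) → s.sum = n • a →
      s = Multiset.replicate n a}

/- ### Auxiliary lemmas -/

lemma pow_mem_Malpha (α : ℂ) (n : ℕ) : α ^ n ∈ Malpha α :=
  AddSubmonoid.subset_closure (Set.mem_range_self n)

lemma mem_Malpha_iff (α : ℂ) (x : ℂ) :
    x ∈ Malpha α ↔ ∃ p : ℤ[X], (∀ i, 0 ≤ p.coeff i) ∧ aeval α p = x := by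
  constructor
  · intro hx
    induction hx using AddSubmonoid.closure_induction with
    | mem y hy =>
      obtain ⟨n, rfl⟩ := hy
      exact ⟨X ^ n, fun i => by rw [coeff_X_pow]; split <;> norm_num, by simp⟩
    | zero => exact ⟨0, by simp, by simp⟩
    | add y z _ _ hy hz =>
      obtain ⟨p, hp, hpe⟩ := hy
      obtain ⟨q, hq, hqe⟩ := hz
      exact ⟨p + q, fun i => by simpa using add_nonneg (hp i) (hq i), by simp [hpe, hqe]⟩
  · rintro ⟨p, hp, rfl⟩
    rw [aeval_eq_sum_range]
    apply AddSubmonoid.sum_mem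
    intro i _
    have h1 : p.coeff i • α ^ i = (p.coeff i).toNat • α ^ i := by
      rw [← natCast_zsmul, Int.toNat_of_nonneg (hp i)]
    rw [h1]
    exact AddSubmonoid.nsmul_mem (S := Malpha α) (pow_mem_Malpha α i) _

noncomputable def fpoly (a b c : ℕ) : ℤ[X] := C (a:ℤ) * X^2 - C (b:ℤ) * X - C (c:ℤ)

lemma fh2 (a b c : ℕ) (h : ℤ[X]) (k : ℕ) :
    (fpoly a b c * h).coeff (k+2)
      = a * h.coeff k - b * h.coeff (k+1) - c * h.coeff (k+2) := by
  have h2 : ((X:ℤ[X])^2 * h).coeff (k+2) = h.coeff k := coeff_X_pow_mul h 2 k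
  have h1 : ((X:ℤ[X]) * h).coeff (k+2) = h.coeff (k+1) := coeff_X_mul h (k+1)
  simp only [fpoly, sub_mul, coeff_sub, mul_assoc, coeff_C_mul, h2, h1]

lemma fh1 (a b c : ℕ) (h : ℤ[X]) :
    (fpoly a b c * h).coeff 1 = -(b * h.coeff 0) - c * h.coeff 1 := by
  have h1 : ((X:ℤ[X]) * h).coeff 1 = h.coeff 0 := coeff_X_mul h 0
  simp only [fpoly, sub_mul, coeff_sub, mul_assoc, coeff_C_mul, h1, coeff_X_pow_mul']
  norm_num

lemma fh0 (a b c : ℕ) (h : ℤ[X]) :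
    (fpoly a b c * h).coeff 0 = -(c * h.coeff 0) := by
  simp only [fpoly, sub_mul, coeff_sub, mul_assoc, coeff_C_mul, coeff_X_pow_mul',
    coeff_X_mul]
  rw [show ((X:ℤ[X]) * h).coeff 0 = 0 by simp]
  norm_num

lemma hlp1 {x y : ℤ} (hx : 1 ≤ x) (hy : 1 ≤ y) : 1 ≤ x * y := by nlinarith
lemma hlp2 {x y : ℤ} (hx : 1 ≤ x) (hy : 0 ≤ y) : y ≤ x * y := by nlinarith
lemma hlp3 {a x : ℤ} (ha : 2 ≤ a) (hx : x ≤ -1) : a * x ≤ -2 := by nlinarith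
lemma hlp4 {a x : ℤ} (ha : 1 ≤ a) (hx : x ≤ -1) : a * x ≤ -1 := by nlinarith
lemma hlp5 {a x : ℤ} (ha : 1 ≤ a) (h : 1 ≤ a * x) : 1 ≤ x := by nlinarith
lemma hlp6 {x y : ℤ} (hx : 0 ≤ x) (hy : 0 ≤ y) : 0 ≤ x * y := mul_nonneg hx hy

lemma comb_zero {a b c n : ℕ} (ha : 1 ≤ a) (hb : 1 ≤ b) (hc : 1 ≤ c)
    (han : 2 ≤ a ∨ n ≤ 1) (h : ℤ[X])
    (hpos : ∀ k, 0 ≤ ((X:ℤ[X]) ^ n + fpoly a b c * h).coeff k) : h = 0 := by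
  have ha' : (1:ℤ) ≤ (a:ℤ) := by exact_mod_cast ha
  have hb' : (1:ℤ) ≤ (b:ℤ) := by exact_mod_cast hb
  have hc' : (1:ℤ) ≤ (c:ℤ) := by exact_mod_cast hc
  have ha0 : (0:ℤ) ≤ (a:ℤ) := by linarith
  have hb0 : (0:ℤ) ≤ (b:ℤ) := by linarith
  have hc0 : (0:ℤ) ≤ (c:ℤ) := by linarith
  have key : ∀ k, 0 ≤ (if k + 2 = n then (1:ℤ) else 0)
      + ((a:ℤ) * h.coeff k - b * h.coeff (k+1) - c * h.coeff (k+2)) := by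
    intro k
    have := hpos (k+2)
    rwa [coeff_add, coeff_X_pow, fh2] at this
  have key1 : 0 ≤ (if 1 = n then (1:ℤ) else 0) + (-((b:ℤ) * h.coeff 0) - c * h.coeff 1) := by
    have := hpos 1
    rwa [coeff_add, coeff_X_pow, fh1] at this
  have key0 : 0 ≤ (if 0 = n then (1:ℤ) else 0) + -((c:ℤ) * h.coeff 0) := by
    have := hpos 0
    rwa [coeff_add, coeff_X_pow, fh0] at this
  -- Step A : all coefficients of h are nonnegative
  have hA : ∀ k, 0 ≤ h.coeff k := by
    have aux : ∀ m k, h.natDegree < k + m → 0 ≤ h.coeff k := by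
      intro m
      induction m with
      | zero => intro k hk; rw [coeff_eq_zero_of_natDegree_lt (by omega)]
      | succ m IH =>
        intro k hk
        by_cases hkd : h.natDegree < k + m
        · exact IH k hkd
        · have h1 : 0 ≤ h.coeff (k+1) := IH (k+1) (by omega)
          have h2 : 0 ≤ h.coeff (k+2) := IH (k+2) (by omega)
          have hk2 := key k
          have hbn : 0 ≤ (b:ℤ) * h.coeff (k+1) := hlp6 hb0 h1
          have hcn : 0 ≤ (c:ℤ) * h.coeff (k+2) := hlp6 hc0 h2
          by_contra hneg
          push_neg at hneg
          have hle : h.coeff k ≤ -1 := by omega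
          rcases han with h2a | hn1
          · have h2a' : (2:ℤ) ≤ (a:ℤ) := by exact_mod_cast h2a
            have := hlp3 h2a' hle
            split at hk2 <;> linarith
          · rw [if_neg (by omega)] at hk2
            have := hlp4 ha' hle
            linarith
    intro k; exact aux (h.natDegree + 1) k (by omega)
  by_contra hne
  have hd1 : 1 ≤ h.coeff h.natDegree := by
    have h0 := hA h.natDegree
    have hne' : h.coeff h.natDegree ≠ 0 := leadingCoeff_ne_zero.mpr hne
    omega
  set d := h.natDegree with hdd
  -- Claim U
  have hU : ∀ k, k ≤ d → (n ≤ k + 1 ∨ d + 2 ≤ n) → 1 ≤ h.coeff k := by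
    have aux : ∀ m k, d ≤ k + m → k ≤ d → (n ≤ k + 1 ∨ d + 2 ≤ n) → 1 ≤ h.coeff k := by
      intro m
      induction m with
      | zero =>
        intro k hk1 hk2 _
        have hkd : k = d := by omega
        rw [hkd]; exact hd1
      | succ m IH =>
        intro k hk1 hk2 hS
        rcases eq_or_lt_of_le hk2 with heq | hlt
        · rw [heq]; exact hd1
        · have hk1' : 1 ≤ h.coeff (k+1) := by
            apply IH (k+1) (by omega) (by omega)
            rcases hS with hS | hS
            · exact Or.inl (by omega)
            · exact Or.inr hS
          have hkey := key k
          rw [if_neg (by omega)] at hkey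
          have hcn : 0 ≤ (c:ℤ) * h.coeff (k+2) := hlp6 hc0 (hA (k+2))
          have hbn : (1:ℤ) ≤ (b:ℤ) * h.coeff (k+1) := hlp1 hb' hk1'
          exact hlp5 ha' (by linarith)
    intro k hk hS; exact aux d k (by omega) hk hS
  -- Claim L (used when 2 ≤ n ≤ d+1)
  have hL : n ≤ d + 1 → ∀ k, k + 2 ≤ n → 1 ≤ h.coeff k + h.coeff (k+1) := by
    intro hnd
    have hbase : ∀ k, k + 2 = n → 1 ≤ h.coeff k + h.coeff (k+1) := by
      intro k hk
      have hu := hU (k+1) (by omega) (Or.inl (by omega))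
      have := hA k
      linarith
    have aux : ∀ m k, n ≤ k + 2 + m → k + 2 ≤ n → 1 ≤ h.coeff k + h.coeff (k+1) := by
      intro m
      induction m with
      | zero => intro k hk1 hk2; exact hbase k (by omega)
      | succ m IH =>
        intro k hk1 hk2
        rcases eq_or_lt_of_le hk2 with heq | hlt
        · exact hbase k heq
        · have hIH : 1 ≤ h.coeff (k+1) + h.coeff (k+2) := IH (k+1) (by omega) (by omega)
          have hkey := key k
          rw [if_neg (by omega)] at hkey
          have h1 := hA (k+1)
          have h2 := hA (k+2)
          have hbn := hlp2 hb' h1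
          have hcn := hlp2 hc' h2
          have hx : 1 ≤ h.coeff k := hlp5 ha' (by linarith)
          linarith
    intro k hk; exact aux n k (by omega) hk
  -- Endgame
  have h0 := hA 0
  have h1 := hA 1
  by_cases hn1 : n = 1
  · have hU0 : 1 ≤ h.coeff 0 := hU 0 (by omega) (Or.inl (by omega))
    rw [if_neg (by omega)] at key0
    have := hlp1 hc' hU0
    linarith
  · rw [if_neg (by omega)] at key1
    have hbx : 0 ≤ (b:ℤ) * h.coeff 0 := hlp6 hb0 h0
    have hcx : 0 ≤ (c:ℤ) * h.coeff 1 := hlp6 hc0 h1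
    by_cases hcase : n ≤ 1 ∨ d + 2 ≤ n
    · have hU0 : 1 ≤ h.coeff 0 := by
        apply hU 0 (by omega)
        rcases hcase with hx | hx
        · exact Or.inl (by omega)
        · exact Or.inr hx
      have := hlp1 hb' hU0
      linarith
    · push_neg at hcase
      obtain ⟨hn2, hnd⟩ := hcase
      have hL0 : 1 ≤ h.coeff 0 + h.coeff 1 := hL (by omega) 0 (by omega)
      have hbn := hlp2 hb' h0
      have hcn := hlp2 hc' h1
      linarith
lemma fprim {a b c : ℕ} (hgcd : Nat.gcd a (Nat.gcd b c) = 1) :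
    (fpoly a b c).IsPrimitive := by
  intro r hr
  rw [C_dvd_iff_dvd_coeff] at hr
  have h2 := hr 2
  have h1 := hr 1
  have h0 := hr 0
  have e2 : (fpoly a b c).coeff 2 = (a:ℤ) := by simp [fpoly, coeff_X_pow]
  have e1 : (fpoly a b c).coeff 1 = -(b:ℤ) := by simp [fpoly, coeff_X_pow]
  have e0 : (fpoly a b c).coeff 0 = -(c:ℤ) := by simp [fpoly, coeff_X_pow]
  rw [e2] at h2; rw [e1, dvd_neg] at h1; rw [e0, dvd_neg] at h0
  rw [Int.isUnit_iff_natAbs_eq]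
  have d2 : r.natAbs ∣ a := by
    rw [← Int.natAbs_natCast a]; exact Int.natAbs_dvd_natAbs.mpr h2
  have d1 : r.natAbs ∣ b := by
    rw [← Int.natAbs_natCast b]; exact Int.natAbs_dvd_natAbs.mpr h1
  have d0 : r.natAbs ∣ c := by
    rw [← Int.natAbs_natCast c]; exact Int.natAbs_dvd_natAbs.mpr h0
  have : r.natAbs ∣ Nat.gcd a (Nat.gcd b c) := Nat.dvd_gcd d2 (Nat.dvd_gcd d1 d0)
  rwa [hgcd, Nat.dvd_one] at this

lemma key_dvd {a b c : ℕ} (ha : 0 < a) (hgcd : Nat.gcd a (Nat.gcd b c) = 1) (α : ℂ)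
    (hroot : (a : ℂ) * α ^ 2 - (b : ℂ) * α - (c : ℂ) = 0)
    (hnr : ∀ q : ℚ, α ≠ (q : ℂ)) (s : ℤ[X]) (hs : aeval α s = 0) :
    fpoly a b c ∣ s := by
  rcases eq_or_ne s 0 with rfl | hs0
  · exact dvd_zero _
  have haQ : ((a:ℚ)) ≠ 0 := by positivity
  have haC : ((a:ℂ)) ≠ 0 := Nat.cast_ne_zero.mpr ha.ne'
  set G : ℚ[X] := X ^ 2 - (C ((b:ℚ)/(a:ℚ)) * X + C ((c:ℚ)/(a:ℚ))) with hG
  have hGmonic : G.Monic := by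
    apply monic_X_pow_sub
    apply lt_of_le_of_lt (degree_linear_le)
    norm_num
  have hGdeg : G.degree = 2 := by
    have hlt : degree (C ((b:ℚ)/(a:ℚ)) * X + C ((c:ℚ)/(a:ℚ))) < degree ((X:ℚ[X]) ^ 2) := by
      rw [degree_X_pow]
      exact lt_of_le_of_lt degree_linear_le (by norm_num)
    rw [hG, degree_sub_eq_left_of_degree_lt hlt, degree_X_pow]
    norm_cast
  have hGroot : aeval α G = 0 := by
    rw [hG]
    simp only [map_sub, map_add, map_mul, aeval_X_pow, aeval_C, aeval_X]
    rw [show (algebraMap ℚ ℂ) ((b:ℚ)/(a:ℚ)) = (b:ℂ)/(a:ℂ) by push_cast [eq_ratCast]; norm_num,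
      show (algebraMap ℚ ℂ) ((c:ℚ)/(a:ℚ)) = (c:ℂ)/(a:ℂ) by push_cast [eq_ratCast]; norm_num]
    field_simp
    linear_combination hroot
  set S : ℚ[X] := s.map (Int.castRingHom ℚ) with hSdef
  have hSroot : aeval α S = 0 := by
    rw [hSdef, show Int.castRingHom ℚ = algebraMap ℤ ℚ from rfl, aeval_map_algebraMap]
    exact hs
  -- the remainder is zero
  have hmod : S %ₘ G = 0 := by
    set R := S %ₘ G with hR
    have hdegR : R.degree < 2 := by rw [← hGdeg]; exact degree_modByMonic_lt S hGmonic
    have hRroot : aeval α R = 0 := by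
      have hdiv := modByMonic_add_div S G
      have := congrArg (aeval α) hdiv
      rw [map_add, map_mul, hGroot, zero_mul, add_zero] at this
      rw [← hR] at this
      rw [this, hSroot]
    by_contra hR0
    have hdeg1 : R.natDegree ≤ 1 := by
      have h2 : R.natDegree < 2 := (natDegree_lt_iff_degree_lt hR0).mpr (by exact_mod_cast hdegR)
      omega
    have hform := eq_X_add_C_of_natDegree_le_one hdeg1
    rw [hform] at hRroot
    simp only [map_add, map_mul, aeval_C, aeval_X] at hRroot
    rcases eq_or_ne (R.coeff 1) 0 with h1 | h1
    · rw [h1] at hRroot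
      simp only [map_zero, zero_mul, zero_add] at hRroot
      have : R.coeff 0 = 0 := by
        have := hRroot
        rwa [eq_ratCast, Rat.cast_eq_zero] at this
      apply hR0
      rw [hform, h1, this]; simp
    · apply hnr (-(R.coeff 0) / (R.coeff 1))
      rw [eq_ratCast, eq_ratCast] at hRroot
      push_cast
      have h1' : ((R.coeff 1 : ℚ) : ℂ) ≠ 0 := by
        simpa using h1
      field_simp
      linear_combination hRroot
  -- so G divides S, hence fQ divides S
  have hGS : G ∣ S := by
    have hdiv := modByMonic_add_div S G
    rw [hmod, zero_add] at hdiv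
    exact ⟨S /ₘ G, hdiv.symm⟩
  have hfQ : (fpoly a b c).map (Int.castRingHom ℚ) = C (a:ℚ) * G := by
    have e1 : (a:ℚ) * ((b:ℚ)/(a:ℚ)) = (b:ℚ) := by field_simp
    have e2 : (a:ℚ) * ((c:ℚ)/(a:ℚ)) = (c:ℚ) := by field_simp
    simp only [fpoly, Polynomial.map_sub, Polynomial.map_mul, Polynomial.map_pow, map_C,
      map_X, Int.coe_castRingHom, Int.cast_natCast]
    rw [hG, mul_sub, mul_add, ← mul_assoc, ← C_mul, ← C_mul, e1, e2]
    ring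
  have hfQS : (fpoly a b c).map (Int.castRingHom ℚ) ∣ S := by
    rw [hfQ]
    obtain ⟨T, hT⟩ := hGS
    have hone : C (a:ℚ) * C ((a:ℚ)⁻¹) = 1 := by
      rw [← C_mul, mul_inv_cancel₀ haQ, C_1]
    exact ⟨C ((a:ℚ)⁻¹) * T, by rw [hT]; linear_combination (-(G * T)) * hone⟩
  -- Gauss's lemma
  have hprim := fprim (a := a) (b := b) (c := c) hgcd
  have hsp : fpoly a b c ∣ s.primPart := by
    rw [IsPrimitive.Int.dvd_iff_map_cast_dvd_map_cast _ _ hprim]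
    have hcontent : s = C s.content * s.primPart := s.eq_C_content_mul_primPart
    have hc0 : (s.content : ℚ) ≠ 0 := by
      simp only [ne_eq, Int.cast_eq_zero]
      exact fun h => hs0 (content_eq_zero_iff.mp h)
    have hmap : S = C ((s.content : ℚ)) * (s.primPart.map (Int.castRingHom ℚ)) := by
      rw [hSdef]
      conv_lhs => rw [hcontent]
      rw [Polynomial.map_mul, map_C]
      rfl
    have : (fpoly a b c).map (Int.castRingHom ℚ) ∣ C ((s.content:ℚ))⁻¹ * S :=
      Dvd.dvd.mul_left hfQS _
    rwa [hmap, ← mul_assoc, ← C_mul, inv_mul_cancel₀ hc0, C_1, one_mul] at this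
  exact hsp.trans s.primPart_dvd
lemma real_struct {a b c : ℕ} (ha : 0 < a) (hc : 0 < c) (α : ℂ)
    (hroot : (a : ℂ) * α ^ 2 - (b : ℂ) * α - (c : ℂ) = 0) :
    α.im = 0 ∧ (a:ℝ) * α.re ^ 2 - (b:ℝ) * α.re - (c:ℝ) = 0 := by
  have ha' : (1:ℝ) ≤ (a:ℝ) := by exact_mod_cast ha
  have hc' : (1:ℝ) ≤ (c:ℝ) := by exact_mod_cast hc
  have him := congrArg Complex.im hroot
  have hre := congrArg Complex.re hroot
  simp only [pow_two, Complex.sub_im, Complex.sub_re, Complex.mul_im, Complex.mul_re,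
    Complex.natCast_im, Complex.natCast_re, Complex.zero_im, Complex.zero_re,
    zero_mul, mul_zero, zero_add, add_zero, sub_zero] at him hre
  have him0 : α.im = 0 := by
    by_contra hne
    have h2 : 0 < α.im ^ 2 := by positivity
    have hb2 : (b:ℝ) = 2 * a * α.re := by
      apply mul_right_cancel₀ hne
      linear_combination -him
    rw [hb2] at hre
    nlinarith [mul_nonneg (by positivity : (0:ℝ) ≤ (a:ℝ)) (sq_nonneg α.re),
      mul_pos (by positivity : (0:ℝ) < (a:ℝ)) h2]
  refine ⟨him0, ?_⟩
  rw [him0] at hre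
  linear_combination hre

lemma irr_of_root {a b c : ℕ} (ha : 0 < a)
    (hirr : Irrational (Real.sqrt ((b : ℝ) ^ 2 + 4 * a * c)))
    (r : ℝ) (hr : (a:ℝ) * r ^ 2 - (b:ℝ) * r - (c:ℝ) = 0) : Irrational r := by
  by_contra hcon
  obtain ⟨q, hq⟩ := not_not.mp hcon
  have hw : (2*(a:ℝ)*r - b)^2 = (b:ℝ)^2 + 4*a*c := by
    linear_combination (4*(a:ℝ)) * hr
  apply hirr
  rw [← hw, Real.sqrt_sq_eq_abs, ← hq]
  exact ⟨|2*(a:ℚ)*q - (b:ℚ)|, by push_cast; ring_nf⟩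

lemma pow_injective {r : ℝ} (hirr : Irrational r) :
    Function.Injective (fun n : ℕ => ((r:ℂ)) ^ n) := by
  intro m n hmn
  simp only at hmn
  have habs : |r| ^ m = |r| ^ n := by
    have := congrArg norm hmn
    rwa [norm_pow, norm_pow, Complex.norm_real, Real.norm_eq_abs] at this
  have hlog : (m:ℝ) * Real.log |r| = (n:ℝ) * Real.log |r| := by
    rw [← Real.log_pow, ← Real.log_pow, habs]
  have hne : Real.log |r| ≠ 0 := by
    intro h0
    rcases Real.log_eq_zero.mp h0 with h | h | h
    · exact hirr.ne_zero (abs_eq_zero.mp h)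
    · rcases abs_eq (by norm_num : (0:ℝ) ≤ 1) |>.mp h with h' | h'
      · exact hirr.ne_one h'
      · exact hirr.ne_int (-1) (by exact_mod_cast h')
    · have : |r| ≥ 0 := abs_nonneg r
      linarith
  have : (m:ℝ) = (n:ℝ) := mul_right_cancel₀ hne hlog
  exact_mod_cast this
-- checkpoint ok

lemma power_atom {a b c : ℕ} (ha : 0 < a) (hb : 0 < b) (hc : 0 < c)
    (hgcd : Nat.gcd a (Nat.gcd b c) = 1) (α : ℂ)
    (hroot : (a : ℂ) * α ^ 2 - (b : ℂ) * α - (c : ℂ) = 0)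
    (hnr : ∀ q : ℚ, α ≠ (q : ℂ)) (hα0 : α ≠ 0)
    (n : ℕ) (hcomb : 2 ≤ a ∨ n ≤ 1) : α ^ n ∈ atomsM α := by
  refine ⟨pow_mem_Malpha α n, pow_ne_zero n hα0, ?_⟩
  intro u v hu hv heq
  obtain ⟨p, hp, rfl⟩ := (mem_Malpha_iff α u).mp hu
  obtain ⟨q, hq, rfl⟩ := (mem_Malpha_iff α v).mp hv
  have hsum : aeval α (p + q - X ^ n) = 0 := by
    rw [map_sub, map_add, map_pow, aeval_X]
    linear_combination -heq
  obtain ⟨h, hh⟩ := key_dvd ha hgcd α hroot hnr _ hsum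
  have hXn : p + q = X ^ n + fpoly a b c * h := by linear_combination hh
  have hzero : h = 0 := by
    apply comb_zero ha hb hc hcomb
    intro k
    rw [← hXn, coeff_add]
    exact add_nonneg (hp k) (hq k)
  rw [hzero, mul_zero, add_zero] at hXn
  by_cases hpn : p.coeff n = 0
  · left
    have hp0 : p = 0 := by
      apply Polynomial.ext
      intro k
      have hk := congrArg (fun t => t.coeff k) hXn
      simp only [coeff_add, coeff_X_pow, coeff_zero] at hk ⊢
      have := hp k
      have := hq k
      by_cases hkn : k = n
      · rw [hkn]; exact hpn
      · rw [if_neg hkn] at hk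
        omega
    rw [hp0, map_zero]
  · right
    have hq0 : q = 0 := by
      apply Polynomial.ext
      intro k
      have hk := congrArg (fun t => t.coeff k) hXn
      simp only [coeff_add, coeff_X_pow, coeff_zero] at hk ⊢
      have := hp k
      have := hq k
      by_cases hkn : k = n
      · subst hkn
        rw [if_pos rfl] at hk
        have hpn' : 1 ≤ p.coeff k := by have := hp k; omega
        omega
      · rw [if_neg hkn] at hk
        omega
    rw [hq0, map_zero]

lemma atom_subset_powers (α : ℂ) (hα0 : α ≠ 0) :
    atomsM α ⊆ Set.range (fun n : ℕ => α ^ n) := by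
  rintro x ⟨hxM, hx0, hxat⟩
  obtain ⟨p, hp, rfl⟩ := (mem_Malpha_iff α x).mp hxM
  have hpne : p ≠ 0 := by rintro rfl; simp at hx0
  set i := p.natDegree with hi
  have hpi : 1 ≤ p.coeff i := by
    have h0 := hp i
    have hne' : p.coeff i ≠ 0 := leadingCoeff_ne_zero.mpr hpne
    omega
  have hmem2 : aeval α (p - X ^ i) ∈ Malpha α := by
    apply (mem_Malpha_iff α _).mpr
    refine ⟨p - X ^ i, ?_, rfl⟩
    intro j
    rw [coeff_sub, coeff_X_pow]
    have := hp j
    by_cases hj : j = i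
    · rw [if_pos hj, hj]; omega
    · rw [if_neg hj]; omega
  have heq : aeval α p = α ^ i + aeval α (p - X ^ i) := by
    rw [map_sub, map_pow, aeval_X]
    ring
  rcases hxat (α ^ i) (aeval α (p - X ^ i)) (pow_mem_Malpha α i) hmem2 heq with h | h
  · exact absurd h (pow_ne_zero i hα0)
  · exact ⟨i, by rw [heq, h, add_zero]⟩

theorem stmt_12 (a b c : ℕ) (ha : 0 < a) (hb : 0 < b) (hc : 0 < c)
    (hgcd : Nat.gcd a (Nat.gcd b c) = 1)
    (hirr : Irrational (Real.sqrt ((b : ℝ) ^ 2 + 4 * a * c)))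
    (α : ℂ) (hroot : (a : ℂ) * α ^ 2 - (b : ℂ) * α - (c : ℂ) = 0) :
    (a = 1 → atomsM α = {1, α}) ∧
    (1 < a → atomsM α = Set.range (fun n : ℕ => α ^ n) ∧ (atomsM α).Infinite) := by
  obtain ⟨him0, hre⟩ := real_struct ha hc α hroot
  set r := α.re with hr
  have hα : α = (r : ℂ) := Complex.ext (by simp [hr]) (by simp [him0])
  have hirrr : Irrational r := irr_of_root ha hirr r hre
  have hnr : ∀ q : ℚ, α ≠ (q : ℂ) := by
    intro q hq
    apply hirrr
    refine ⟨q, Complex.ofReal_injective ?_⟩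
    rw [← hα, hq]
    norm_cast
  have hα0 : α ≠ 0 := by
    rw [hα]
    exact_mod_cast Complex.ofReal_ne_zero.mpr hirrr.ne_zero
  have hinj : Function.Injective (fun n : ℕ => α ^ n) := by
    rw [hα]; exact pow_injective hirrr
  constructor
  · -- the case a = 1
    intro ha1
    subst ha1
    ext x
    constructor
    · intro hx
      obtain ⟨i, rfl⟩ := atom_subset_powers α hα0 hx
      simp only at hx ⊢
      match i with
      | 0 => left; norm_num
      | 1 => right; simp
      | (i+2) =>
        exfalso
        have h2 : α ^ 2 = (b:ℂ) * α + (c:ℂ) := by linear_combination hroot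
        have heq : α ^ (i+2) = (b:ℂ) * α ^ (i+1) + (c:ℂ) * α ^ i := by
          have : α ^ (i+2) = α ^ i * α ^ 2 := by ring
          rw [this, h2]; ring
        have hu : (b:ℂ) * α ^ (i+1) ∈ Malpha α := by
          rw [show ((b:ℂ)) * α ^ (i+1) = b • α ^ (i+1) by simp [nsmul_eq_mul]]
          exact AddSubmonoid.nsmul_mem (S := Malpha α) (pow_mem_Malpha α (i+1)) _
        have hv : (c:ℂ) * α ^ i ∈ Malpha α := by
          rw [show ((c:ℂ)) * α ^ i = c • α ^ i by simp [nsmul_eq_mul]]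
          exact AddSubmonoid.nsmul_mem (S := Malpha α) (pow_mem_Malpha α i) _
        rcases hx.2.2 _ _ hu hv heq with h | h
        · exact mul_ne_zero (Nat.cast_ne_zero.mpr hb.ne') (pow_ne_zero _ hα0) h
        · exact mul_ne_zero (Nat.cast_ne_zero.mpr hc.ne') (pow_ne_zero _ hα0) h
    · intro hx
      rcases hx with hx | hx
      · rw [hx]
        have h0 := power_atom ha hb hc hgcd α hroot hnr hα0 0 (Or.inr (by omega))
        rwa [pow_zero] at h0
      · rw [Set.mem_singleton_iff] at hx
        rw [hx]
        have h1 := power_atom ha hb hc hgcd α hroot hnr hα0 1 (Or.inr (by omega))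
        rwa [pow_one] at h1
  · -- the case 1 < a
    intro ha2
    have hEq : atomsM α = Set.range (fun n : ℕ => α ^ n) := by
      apply Set.Subset.antisymm (atom_subset_powers α hα0)
      rintro x ⟨n, rfl⟩
      exact power_atom ha hb hc hgcd α hroot hnr hα0 n (Or.inl ha2)
    exact ⟨hEq, hEq ▸ Set.infinite_range_of_injective hinj⟩
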